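/- If a random vector V ∈ ℝ^m has independent, mean-zero components each bounded in absolute value by 1, and M ∈ ℝ^{m×m} is symmetric positive semidefinite with trace at most d/m and operator norm at most 1/m, then with probability at least 1 − δ, VᵀMV ≤ C·(d + log(1/δ))/m for a universal constant C. -/

import Mathlib

open MeasureTheory ProbabilityTheory Matrix

open Real in
lemma gauss_shift_integral (b : ℝ) :
    ∫ x : ℝ, Real.exp (-(1/2) * (x - b) ^ 2) = Real.sqrt (2 * π) := by
  rw [show (fun x : ℝ => Real.exp (-(1/2) * (x - b) ^ 2)) = fun x : ℝ => (fun y : ℝ => Real.exp (-(1/2) * y ^ 2)) (x - b) from rfl]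
  rw [integral_sub_right_eq_self (fun y : ℝ => Real.exp (-(1/2) * y ^ 2)) b]
  rw [integral_gaussian (1/2)]
  norm_num [mul_comm]

open Real in
lemma gauss_lin (c w : ℝ) :
    ∫ x : ℝ, Real.exp (c * x * w - x ^ 2 / 2) = Real.sqrt (2 * π) * Real.exp ((c * w) ^ 2 / 2) := by
  have : ∀ x : ℝ, Real.exp (c * x * w - x ^ 2 / 2)
      = Real.exp (-(1/2) * (x - c * w) ^ 2) * Real.exp ((c * w) ^ 2 / 2) := by
    intro x; rw [← Real.exp_add]; ring_nf
  simp_rw [this]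
  rw [integral_mul_const, gauss_shift_integral]

open Real in
lemma integrable_exp_lin_quad (a : ℝ) :
    Integrable (fun x : ℝ => Real.exp (a * x - x ^ 2 / 2)) := by
  have h : ∀ x : ℝ, Real.exp (a * x - x ^ 2 / 2)
      = Real.exp (a ^ 2 / 2) * Real.exp (-(1/2) * (x - a) ^ 2) := by
    intro x; rw [← Real.exp_add]; ring_nf
  simp_rw [h]
  apply Integrable.const_mul
  have h2 : Integrable (fun y : ℝ => Real.exp (-(1/2) * y ^ 2)) := integrable_exp_neg_mul_sq (by norm_num)
  exact h2.comp_sub_right a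

open Real in
lemma integrable_exp_abs_quad (a : ℝ) :
    Integrable (fun x : ℝ => Real.exp (a * |x| - x ^ 2 / 2)) := by
  refine Integrable.mono' ((integrable_exp_lin_quad a).add (integrable_exp_lin_quad (-a)))
    ?_ (Filter.Eventually.of_forall fun x => ?_)
  · exact (Measurable.exp (by fun_prop)).aestronglyMeasurable
  · rw [Real.norm_eq_abs, Real.abs_exp]
    rcases abs_cases x with ⟨h1, _⟩ | ⟨h1, _⟩ <;> rw [h1]
    · exact le_add_of_nonneg_right (Real.exp_pos _).le
    · rw [show a * -x = -a * x by ring]; exact le_add_of_nonneg_left (Real.exp_pos _).le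

open Real in
lemma hoeffding_aux {Ω : Type} [MeasurableSpace Ω] (μ : Measure Ω) [IsProbabilityMeasure μ]
    (X : Ω → ℝ) (hm : Measurable X) (h0 : μ[X] = 0) (hb : ∀ᵐ ω ∂μ, |X ω| ≤ 1) (u : ℝ) :
    ∫ ω, Real.exp (u * X ω) ∂μ ≤ Real.exp (u ^ 2 / 2) := by
  have hXi : Integrable X μ := by
    refine Integrable.mono' (integrable_const 1) hm.aestronglyMeasurable ?_
    filter_upwards [hb] with ω h using by simpa using h
  have hint : Integrable (fun ω => Real.exp (u * X ω)) μ := by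
    refine Integrable.mono' (integrable_const (Real.exp |u|)) ((hm.const_mul u).exp).aestronglyMeasurable ?_
    filter_upwards [hb] with ω h
    rw [Real.norm_eq_abs, Real.abs_exp, Real.exp_le_exp]
    calc u * X ω ≤ |u * X ω| := le_abs_self _
      _ = |u| * |X ω| := abs_mul u (X ω)
      _ ≤ |u| * 1 := by nlinarith [abs_nonneg u, abs_nonneg (X ω)]
      _ = |u| := mul_one _
  have key : ∀ᵐ ω ∂μ, Real.exp (u * X ω) ≤ Real.cosh u + X ω * Real.sinh u := by
    filter_upwards [hb] with ω h
    have h1 : -1 ≤ X ω := by linarith [abs_le.mp h]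
    have h2 : X ω ≤ 1 := (abs_le.mp h).2
    have hc := convexOn_exp.2 (Set.mem_univ (-u)) (Set.mem_univ u)
      (by linarith : (0:ℝ) ≤ (1 - X ω)/2) (by linarith : (0:ℝ) ≤ (1 + X ω)/2) (by ring)
    simp only [smul_eq_mul] at hc
    have : (1 - X ω)/2 * (-u) + (1 + X ω)/2 * u = u * X ω := by ring
    rw [this] at hc
    calc Real.exp (u * X ω) ≤ (1 - X ω)/2 * Real.exp (-u) + (1 + X ω)/2 * Real.exp u := hc
      _ = Real.cosh u + X ω * Real.sinh u := by rw [Real.cosh_eq, Real.sinh_eq]; ring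
  calc ∫ ω, Real.exp (u * X ω) ∂μ ≤ ∫ ω, (Real.cosh u + X ω * Real.sinh u) ∂μ := by
        refine integral_mono_ae hint ?_ key
        exact (integrable_const _).add (hXi.mul_const _)
    _ = Real.cosh u + (∫ ω, X ω ∂μ) * Real.sinh u := by
        rw [integral_add (integrable_const _) (hXi.mul_const _), integral_const,
          integral_mul_const]
        simp
    _ = Real.cosh u := by rw [h0]; ring
    _ ≤ Real.exp (u ^ 2 / 2) := Real.cosh_le_exp_half_sq u

open Real in
lemma quad_eq_sum_sq {m : ℕ} (A : Matrix (Fin m) (Fin m) ℝ) (v : Fin m → ℝ) :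
    v ⬝ᵥ (Aᵀ * A) *ᵥ v = ∑ a, ((A *ᵥ v) a) ^ 2 := by
  rw [← mulVec_mulVec, dotProduct_mulVec, vecMul_transpose]
  simp [dotProduct, sq]

open Real in
lemma spectral_decomp {m : ℕ} (M : Matrix (Fin m) (Fin m) ℝ) (hPSD : M.PosSemidef) :
    ∃ (B : Matrix (Fin m) (Fin m) ℝ) (e : Fin m → ℝ),
      (∀ a, 0 ≤ e a) ∧ (∑ a, e a = M.trace) ∧
      (∀ a, ∃ u : Fin m → ℝ, u ⬝ᵥ u = 1 ∧ e a = u ⬝ᵥ M *ᵥ u) ∧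
      Bᵀ * B = M ∧ B * Bᵀ = diagonal e := by
  have hH : M.IsHermitian := hPSD.1
  set e : Fin m → ℝ := hH.eigenvalues with he
  set U : Matrix (Fin m) (Fin m) ℝ := (IsHermitian.eigenvectorUnitary hH : Matrix (Fin m) (Fin m) ℝ) with hU
  have hstar : star U = Uᵀ := by
    rw [Matrix.star_eq_conjTranspose, conjTranspose_eq_transpose_of_trivial]
  have hUtU : Uᵀ * U = 1 := by
    rw [← hstar]; exact mem_unitaryGroup_iff'.mp (IsHermitian.eigenvectorUnitary hH).2
  have hUUt : U * Uᵀ = 1 := by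
    rw [← hstar]; exact mem_unitaryGroup_iff.mp (IsHermitian.eigenvectorUnitary hH).2
  have hspec : M = U * diagonal e * Uᵀ := by
    have := hH.spectral_theorem
    rwa [Unitary.conjStarAlgAut_apply, ← hU, hstar, RCLike.ofReal_real_eq_id, Function.id_comp] at this
  refine ⟨diagonal (fun a => Real.sqrt (e a)) * Uᵀ, e, fun a => hPSD.eigenvalues_nonneg a, ?_, ?_, ?_, ?_⟩
  · rw [hspec, trace_mul_cycle, hUtU, one_mul, trace_diagonal]
  · intro a
    refine ⟨fun i => U i a, ?_, ?_⟩
    · have h1 : (Uᵀ * U) a a = 1 := by rw [hUtU]; simp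
      rw [← h1, mul_apply]
      simp [dotProduct, transpose_apply, sq]
    · have h2 : (Uᵀ * M * U) a a = e a := by
        rw [hspec, ← mul_assoc, ← mul_assoc, hUtU, one_mul, mul_assoc, hUtU, mul_one]
        simp
      rw [← h2]
      simp only [mul_apply, transpose_apply, dotProduct, mulVec, Finset.sum_mul, Finset.mul_sum]
      rw [Finset.sum_comm]
      exact Finset.sum_congr rfl fun i _ => Finset.sum_congr rfl fun j _ => by ring
  · rw [transpose_mul, transpose_transpose, diagonal_transpose, mul_assoc,
      ← mul_assoc (diagonal _), diagonal_mul_diagonal]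
    have : (fun a => Real.sqrt (e a) * Real.sqrt (e a)) = e := by
      ext a; exact Real.mul_self_sqrt (hPSD.eigenvalues_nonneg a)
    rw [this, ← mul_assoc, ← hspec]
  · rw [transpose_mul, transpose_transpose, diagonal_transpose, mul_assoc, ← mul_assoc Uᵀ, hUtU,
      one_mul, diagonal_mul_diagonal]
    have h3 : (fun a => Real.sqrt (e a) * Real.sqrt (e a)) = e :=
      funext fun a => Real.mul_self_sqrt (hPSD.eigenvalues_nonneg a)
    rw [h3]

open Real in
lemma sqrt_factor_le {s : ℝ} (hs0 : 0 ≤ s) (hs4 : s ≤ 1/4) :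
    (Real.sqrt (2*π))⁻¹ * Real.sqrt (π / (1/2 - s)) ≤ Real.exp (2*s) := by
  have h12 : (0:ℝ) < 1/2 - s := by linarith
  have hpi := Real.pi_pos
  have hL0 : 0 ≤ (Real.sqrt (2*π))⁻¹ * Real.sqrt (π / (1/2 - s)) := by positivity
  have hsq : ((Real.sqrt (2*π))⁻¹ * Real.sqrt (π / (1/2 - s)))^2 ≤ (Real.exp (2*s))^2 := by
    rw [mul_pow, ← Real.exp_nat_mul]
    rw [inv_pow, Real.sq_sqrt (by positivity : (0:ℝ) ≤ 2*π),
      Real.sq_sqrt (by positivity : (0:ℝ) ≤ π / (1/2 - s))]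
    have hexp := Real.add_one_le_exp (4*s)
    have h24 : ((2:ℕ):ℝ) * (2*s) = 4*s := by push_cast; ring
    rw [h24]
    rw [inv_mul_le_iff₀ (by positivity : (0:ℝ) < 2*π), div_le_iff₀ h12]
    have hkey : 2*π*(1/2-s)*(4*s+1) ≤ 2*π*(1/2-s)*Real.exp (4*s) :=
      mul_le_mul_of_nonneg_left hexp (by positivity)
    nlinarith [hkey, hpi, mul_nonneg (mul_nonneg hpi.le hs0) (by linarith : (0:ℝ) ≤ 1 - 4*s)]
  calc (Real.sqrt (2*π))⁻¹ * Real.sqrt (π / (1/2 - s))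
      = Real.sqrt ((((Real.sqrt (2*π))⁻¹ * Real.sqrt (π / (1/2 - s))))^2) := by
        rw [Real.sqrt_sq hL0]
    _ ≤ Real.sqrt ((Real.exp (2*s))^2) := Real.sqrt_le_sqrt hsq
    _ = Real.exp (2*s) := Real.sqrt_sq (Real.exp_pos _).le

open Real in
lemma mgf_core {m : ℕ} (hm : 0 < m) {Ω : Type} [MeasurableSpace Ω] (μ : Measure Ω)
    [IsProbabilityMeasure μ] (V : Fin m → Ω → ℝ) (M : Matrix (Fin m) (Fin m) ℝ)
    (hindep : iIndepFun V μ) (hmeas : ∀ i, Measurable (V i))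
    (hmean : ∀ i, μ[V i] = 0) (hbdd : ∀ i, ∀ᵐ ω ∂μ, |V i ω| ≤ 1)
    (hPSD : M.PosSemidef)
    (hOp : ∀ v : Fin m → ℝ, v ⬝ᵥ M *ᵥ v ≤ (1 / m) * (v ⬝ᵥ v)) :
    ∫ ω, Real.exp ((m / 4 : ℝ) * ((fun i => V i ω) ⬝ᵥ M *ᵥ (fun i => V i ω))) ∂μ
      ≤ Real.exp ((m / 2 : ℝ) * M.trace) := by
  obtain ⟨B, e, he0, htr, hq, hBtB, hBBt⟩ := spectral_decomp M hPSD
  have hm' : (0:ℝ) < m := by exact_mod_cast hm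
  set l : ℝ := (m / 4 : ℝ) with hl
  have hl0 : 0 < l := by positivity
  set c : ℝ := Real.sqrt (m / 2) with hcdef
  have hc0 : 0 ≤ c := Real.sqrt_nonneg _
  have hc2 : c ^ 2 = m / 2 := Real.sq_sqrt (by positivity)
  have he1 : ∀ a, e a ≤ 1 / m := by
    intro a
    obtain ⟨u, hu1, hu2⟩ := hq a
    rw [hu2]
    calc u ⬝ᵥ M *ᵥ u ≤ (1/m) * (u ⬝ᵥ u) := hOp u
      _ = 1/m := by rw [hu1, mul_one]
  have hle : ∀ a, l * e a ≤ 1/4 := by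
    intro a
    calc l * e a ≤ l * (1/m) := by
          apply mul_le_mul_of_nonneg_left (he1 a) hl0.le
      _ = 1/4 := by rw [hl]; field_simp
  have hb2pos : ∀ a, (0:ℝ) < 1/2 - l * e a := by
    intro a
    have h1 : 0 ≤ l * e a := mul_nonneg hl0.le (he0 a)
    have := hle a; linarith
  -- the linearized vector
  set w : Ω → Fin m → ℝ := fun ω => B *ᵥ (fun i => V i ω) with hwdef
  have hwmeas : ∀ a, Measurable (fun ω => w ω a) := by
    intro a
    simp only [hwdef, mulVec, dotProduct]
    exact Finset.measurable_sum _ (fun i _ => (hmeas i).const_mul _)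
  have hX : ∀ ω, (fun i => V i ω) ⬝ᵥ M *ᵥ (fun i => V i ω) = ∑ a, (w ω a) ^ 2 := by
    intro ω; rw [← hBtB]; exact quad_eq_sum_sq B _
  -- uniform bound on w
  set R : ℝ := (∑ a, ∑ i, |B a i|) + 1 with hRdef
  have hR0 : 0 ≤ R := by positivity
  have hwbd : ∀ ω, (∀ i, |V i ω| ≤ 1) → ∀ a, |w ω a| ≤ R := by
    intro ω hω a
    simp only [hwdef, mulVec, dotProduct]
    calc |∑ i, B a i * V i ω| ≤ ∑ i, |B a i * V i ω| := Finset.abs_sum_le_sum_abs _ _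
      _ ≤ ∑ i, |B a i| := by
          apply Finset.sum_le_sum
          intro i _
          rw [abs_mul]
          calc |B a i| * |V i ω| ≤ |B a i| * 1 := by
                apply mul_le_mul_of_nonneg_left (hω i) (abs_nonneg _)
            _ = |B a i| := mul_one _
      _ ≤ R := by
          rw [hRdef]
          have : ∑ i, |B a i| ≤ ∑ a, ∑ i, |B a i| :=
            Finset.single_le_sum (f := fun a => ∑ i, |B a i|)
              (fun a _ => Finset.sum_nonneg fun i _ => abs_nonneg _) (Finset.mem_univ a)
          linarith
  set G : ℝ := Real.sqrt (2 * π) with hGdef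
  have hG0 : 0 < G := Real.sqrt_pos.mpr (by positivity)
  set F : (Fin m → ℝ) → Ω → ℝ := fun g ω => ∏ a, Real.exp (c * g a * w ω a - (g a)^2/2)
    with hFdef
  have hFpos : ∀ g ω, 0 < F g ω := fun g ω => Finset.prod_pos fun a _ => Real.exp_pos _
  -- Step B
  have hStepB : ∀ ω, Real.exp (l * ∑ a, (w ω a)^2) = G⁻¹^m * ∫ g, F g ω := by
    intro ω
    have : ∫ g, F g ω = G^m * Real.exp (l * ∑ a, (w ω a)^2) := by
      rw [hFdef]
      simp only [MeasureTheory.volume_pi]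
      rw [MeasureTheory.integral_fintype_prod_eq_prod (ι := Fin m)
        (f := fun a x => Real.exp (c * x * w ω a - x^2/2))]
      simp_rw [gauss_lin]
      rw [Finset.prod_mul_distrib, Finset.prod_const, ← Real.exp_sum]
      simp only [Finset.card_univ, Fintype.card_fin, hGdef]
      congr 1
      rw [Finset.mul_sum]
      apply congrArg
      apply Finset.sum_congr rfl
      intro a _
      rw [mul_pow, hc2, hl]; ring
    rw [this, ← mul_assoc, inv_pow, inv_mul_cancel₀ (by positivity), one_mul]
  -- Step D: per-g bound via Hoeffding and independence
  have hStepD : ∀ g : Fin m → ℝ, ∫ ω, F g ω ∂μ ≤ ∏ a, Real.exp (-(1/2 - l * e a) * (g a)^2) := by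
    intro g
    set u : Fin m → ℝ := Bᵀ *ᵥ (c • g) with hudef
    have hdot : ∀ ω, ∑ a, c * g a * w ω a = ∑ i, u i * V i ω := by
      intro ω
      calc ∑ a, c * g a * w ω a = (c • g) ⬝ᵥ (B *ᵥ (fun i => V i ω)) := by
            simp only [dotProduct, hwdef, Pi.smul_apply, smul_eq_mul]
        _ = ((c • g) ᵥ* B) ⬝ᵥ (fun i => V i ω) := dotProduct_mulVec _ _ _
        _ = ∑ i, u i * V i ω := by
            rw [hudef, mulVec_transpose]
            simp only [dotProduct]
    have hsum : ∀ ω, F g ω = Real.exp (∑ i, u i * V i ω) * Real.exp (-∑ a, (g a)^2/2) := by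
      intro ω
      simp only [hFdef]
      rw [← Real.exp_sum, ← Real.exp_add]
      congr 1
      rw [Finset.sum_sub_distrib, hdot ω, sub_eq_add_neg]
    have hint : ∫ ω, F g ω ∂μ
        = (∫ ω, Real.exp (∑ i, u i * V i ω) ∂μ) * Real.exp (-∑ a, (g a)^2/2) := by
      simp_rw [hsum]; rw [integral_mul_const]
    set Y : Fin m → Ω → ℝ := fun i ω => u i * V i ω with hYdef
    have hYmeas : ∀ i, Measurable (Y i) := fun i => (hmeas i).const_mul _
    have hYindep : iIndepFun Y μ :=
      hindep.comp (fun i (x : ℝ) => u i * x) (fun i => measurable_const_mul _)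
    have hmgf : ∫ ω, Real.exp (∑ i, u i * V i ω) ∂μ = ∏ i, mgf (Y i) μ 1 := by
      rw [← hYindep.mgf_sum hYmeas Finset.univ]
      simp only [mgf, Finset.sum_apply, one_mul, hYdef]
    have hhoef : ∀ i, mgf (Y i) μ 1 ≤ Real.exp ((u i)^2/2) := by
      intro i
      have h2 : mgf (Y i) μ 1 = ∫ ω, Real.exp ((u i) * V i ω) ∂μ := by
        simp only [mgf, hYdef, one_mul]
      rw [h2]
      exact hoeffding_aux μ (V i) (hmeas i) (hmean i) (hbdd i) (u i)
    have husq : ∑ i, (u i)^2 = ∑ a, e a * (c * g a)^2 := by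
      have h1 : ∑ i, (u i)^2 = ∑ i, (((Bᵀ) *ᵥ (c • g)) i)^2 := by rw [hudef]
      rw [h1, ← quad_eq_sum_sq Bᵀ (c • g), transpose_transpose, hBBt]
      simp only [dotProduct, mulVec_diagonal, Pi.smul_apply, smul_eq_mul]
      exact Finset.sum_congr rfl fun a _ => by ring
    calc ∫ ω, F g ω ∂μ ≤ Real.exp (∑ i, (u i)^2/2) * Real.exp (-∑ a, (g a)^2/2) := by
          rw [hint]
          apply mul_le_mul_of_nonneg_right _ (Real.exp_pos _).le
          rw [hmgf]
          refine le_trans (Finset.prod_le_prod (fun i _ => mgf_nonneg) (fun i _ => hhoef i)) ?_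
          rw [← Real.exp_sum]
      _ = ∏ a, Real.exp (-(1/2 - l * e a) * (g a)^2) := by
          rw [← Real.exp_add, ← Real.exp_sum]
          congr 1
          have husq2 : ∑ i, (u i)^2/2 = ∑ a, (e a * (c * g a)^2)/2 := by
            rw [← Finset.sum_div, husq, Finset.sum_div]
          rw [husq2, ← Finset.sum_neg_distrib, ← Finset.sum_add_distrib]
          apply Finset.sum_congr rfl
          intro a _
          rw [mul_pow, hc2, hl]
          ring
  -- measurability of F
  have hFmeas : Measurable (Function.uncurry F) := by
    show Measurable fun z : (Fin m → ℝ) × Ω => ∏ a, Real.exp (c * z.1 a * w z.2 a - (z.1 a)^2/2)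
    refine Finset.measurable_prod _ (fun a _ => ?_)
    have h1 : Measurable fun z : (Fin m → ℝ) × Ω => c * z.1 a * w z.2 a :=
      Measurable.mul (f := fun z : (Fin m → ℝ) × Ω => c * z.1 a) (g := fun z : (Fin m → ℝ) × Ω => w z.2 a)
        (by fun_prop) ((hwmeas a).comp measurable_snd)
    have h2 : Measurable fun z : (Fin m → ℝ) × Ω => (z.1 a)^2/2 :=
      (((measurable_pi_apply a).comp measurable_fst).pow_const 2).div_const 2
    exact (h1.sub h2).exp
  -- dominating function
  set bnd : (Fin m → ℝ) → ℝ := fun g => ∏ a, Real.exp (c * R * |g a| - (g a)^2/2) with hbnddef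
  have hbndint : Integrable bnd :=
    Integrable.fintype_prod_dep (f := fun _ x => Real.exp (c * R * |x| - x^2/2))
      (fun _ => integrable_exp_abs_quad (c*R))
  have hbndmeas : Measurable bnd := by
    show Measurable fun g : Fin m → ℝ => ∏ a, Real.exp (c * R * |g a| - (g a)^2/2)
    refine Finset.measurable_prod _ (fun a _ => ?_)
    have h1 : Measurable fun g : Fin m → ℝ => c * R * |g a| :=
      by fun_prop
    have h2 : Measurable fun g : Fin m → ℝ => (g a)^2/2 :=
      ((measurable_pi_apply a).pow_const 2).div_const 2
    exact (h1.sub h2).exp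
  have hbp : Integrable (fun z : (Fin m → ℝ) × Ω => bnd z.1)
      ((volume : Measure (Fin m → ℝ)).prod μ) := by
    have hmeas' : AEStronglyMeasurable (fun z : (Fin m → ℝ) × Ω => bnd z.1)
        ((volume : Measure (Fin m → ℝ)).prod μ) :=
      (hbndmeas.comp measurable_fst).aestronglyMeasurable
    rw [integrable_prod_iff hmeas']
    constructor
    · exact Filter.Eventually.of_forall
        (fun g => (integrable_const (bnd g) : Integrable (fun _ : Ω => bnd g) μ))
    · simp only [integral_const, probReal_univ, smul_eq_mul, one_mul]
      exact hbndint.norm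
  have hVae : ∀ᵐ ω ∂μ, ∀ i, |V i ω| ≤ 1 := ae_all_iff.mpr hbdd
  have haebd : ∀ᵐ z ∂((volume : Measure (Fin m → ℝ)).prod μ),
      ‖Function.uncurry F z‖ ≤ bnd z.1 := by
    set S : Set Ω := {ω | ¬ ∀ i, |V i ω| ≤ 1} with hSdef
    have hS0 : μ S = 0 := ae_iff.mp hVae
    rw [ae_iff]
    have hnull : ((volume : Measure (Fin m → ℝ)).prod μ)
        ((Set.univ : Set (Fin m → ℝ)) ×ˢ S) = 0 := by
      rw [Measure.prod_prod, hS0, mul_zero]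
    refine measure_mono_null ?_ hnull
    intro z hz
    refine Set.mem_prod.mpr ⟨Set.mem_univ _, ?_⟩
    by_contra h2
    rw [hSdef, Set.mem_setOf_eq, not_not] at h2
    apply hz
    show ‖F z.1 z.2‖ ≤ bnd z.1
    rw [Real.norm_eq_abs, abs_of_pos (hFpos z.1 z.2)]
    simp only [hFdef, hbnddef]
    apply Finset.prod_le_prod (fun a _ => (Real.exp_pos _).le)
    intro a _
    apply Real.exp_le_exp.mpr
    have h1 : c * z.1 a * w z.2 a ≤ c * R * |z.1 a| := by
      calc c * z.1 a * w z.2 a ≤ |c * z.1 a * w z.2 a| := le_abs_self _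
        _ = c * |z.1 a| * |w z.2 a| := by
            rw [abs_mul, abs_mul, abs_of_nonneg hc0]
        _ ≤ c * |z.1 a| * R := by
            apply mul_le_mul_of_nonneg_left (hwbd z.2 h2 a) (by positivity)
        _ = c * R * |z.1 a| := by ring
    exact sub_le_sub_right h1 _
  have hFint : Integrable (Function.uncurry F) ((volume : Measure (Fin m → ℝ)).prod μ) :=
    Integrable.mono' hbp hFmeas.aestronglyMeasurable haebd
  -- evaluation of the Gaussian product integral
  have hbound2int : Integrable (fun g : Fin m → ℝ => ∏ a, Real.exp (-(1/2 - l * e a) * (g a)^2)) :=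
    Integrable.fintype_prod_dep (f := fun a x => Real.exp (-(1/2 - l * e a) * x^2))
      (fun a => integrable_exp_neg_mul_sq (hb2pos a))
  have hIbound2 : ∫ g : Fin m → ℝ, ∏ a, Real.exp (-(1/2 - l * e a) * (g a)^2)
      = ∏ a, Real.sqrt (π / (1/2 - l * e a)) := by
    rw [MeasureTheory.volume_pi, MeasureTheory.integral_fintype_prod_eq_prod (ι := Fin m)
      (f := fun a x => Real.exp (-(1/2 - l * e a) * x^2))]
    exact Finset.prod_congr rfl fun a _ => integral_gaussian _
  calc ∫ ω, Real.exp (l * ((fun i => V i ω) ⬝ᵥ M *ᵥ (fun i => V i ω))) ∂μ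
      = ∫ ω, (G⁻¹^m * ∫ g, F g ω) ∂μ := by
        apply integral_congr_ae
        apply Filter.Eventually.of_forall
        intro ω
        show Real.exp (l * ((fun i => V i ω) ⬝ᵥ M *ᵥ (fun i => V i ω)))
          = G⁻¹^m * ∫ g, F g ω
        rw [hX ω, hStepB ω]
    _ = G⁻¹^m * ∫ ω, (∫ g, F g ω) ∂μ := integral_const_mul _ _
    _ = G⁻¹^m * ∫ g, (∫ ω, F g ω ∂μ) := by rw [← integral_integral_swap hFint]
    _ ≤ G⁻¹^m * ∫ g : Fin m → ℝ, ∏ a, Real.exp (-(1/2 - l * e a) * (g a)^2) := by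
        apply mul_le_mul_of_nonneg_left _ (by positivity)
        apply integral_mono_of_nonneg
        · exact Filter.Eventually.of_forall fun g => integral_nonneg fun ω => (hFpos g ω).le
        · exact hbound2int
        · exact Filter.Eventually.of_forall hStepD
    _ = ∏ a, (G⁻¹ * Real.sqrt (π / (1/2 - l * e a))) := by
        rw [hIbound2, Finset.prod_mul_distrib, Finset.prod_const, Finset.card_univ,
          Fintype.card_fin]
    _ ≤ ∏ a, Real.exp (2 * (l * e a)) := by
        apply Finset.prod_le_prod
        · intro a _
          positivity
        · intro a _
          exact sqrt_factor_le (mul_nonneg hl0.le (he0 a)) (hle a)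
    _ = Real.exp ((m / 2 : ℝ) * M.trace) := by
        rw [← Real.exp_sum]
        congr 1
        simp_rw [← mul_assoc]
        rw [← Finset.mul_sum, htr, hl]
        ring

/-- Bernstein's inequality for sub-Gaussian quadratic forms: there is a universal
constant `C` such that for any independent, mean-zero, bounded-by-1 components `V` and
any symmetric PSD matrix `M` with `Tr M ≤ d/m` and operator norm at most `1/m`,
`VᵀMV ≤ C (d + log(1/δ))/m` with probability at least `1 - δ`. -/
theorem stmt_10 :
    ∃ C : ℝ, 0 < C ∧
      ∀ (m d : ℕ), 0 < m →
      ∀ (Ω : Type) (_ : MeasurableSpace Ω) (μ : Measure Ω), IsProbabilityMeasure μ →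
      ∀ (V : Fin m → Ω → ℝ) (M : Matrix (Fin m) (Fin m) ℝ),
        iIndepFun V μ →
        (∀ i, Measurable (V i)) →
        (∀ i, μ[V i] = 0) →
        (∀ i, ∀ᵐ ω ∂μ, |V i ω| ≤ 1) →
        M.IsSymm → M.PosSemidef →
        M.trace ≤ (d : ℝ) / m →
        (∀ v : Fin m → ℝ, v ⬝ᵥ M.mulVec v ≤ (1 / m) * (v ⬝ᵥ v)) →
        ∀ δ : ℝ, 0 < δ → δ < 1 →
          1 - δ ≤
            (μ {ω | (fun i => V i ω) ⬝ᵥ M.mulVec (fun i => V i ω)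
                ≤ C * ((d : ℝ) + Real.log (1 / δ)) / m}).toReal := by
  refine ⟨4, by norm_num, ?_⟩
  intro m d hm Ω _inst μ hProb V M hindep hmeas hmean hbdd _hSymm hPSD hTr hOp δ hδ0 hδ1
  haveI := hProb
  have hm' : (0:ℝ) < m := by exact_mod_cast hm
  set X : Ω → ℝ := fun ω => (fun i => V i ω) ⬝ᵥ M *ᵥ (fun i => V i ω) with hXdef
  have hXmeas : Measurable X := by
    show Measurable fun ω => ∑ i, V i ω * ∑ j, M i j * V j ω
    exact Finset.measurable_sum _ fun i _ =>
      (hmeas i).mul (Finset.measurable_sum _ fun j _ => (hmeas j).const_mul _)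
  set t : ℝ := 4 * ((d:ℝ) + Real.log (1/δ)) / m with htdef
  set l : ℝ := ((m:ℝ)/4) with hldef
  have hl0 : 0 < l := by positivity
  have hXle : ∀ᵐ ω ∂μ, X ω ≤ 1 := by
    have hVae : ∀ᵐ ω ∂μ, ∀ i, |V i ω| ≤ 1 := ae_all_iff.mpr hbdd
    filter_upwards [hVae] with ω hω
    calc X ω ≤ (1/m) * ((fun i => V i ω) ⬝ᵥ (fun i => V i ω)) := hOp _
      _ ≤ (1/m) * m := by
          apply mul_le_mul_of_nonneg_left _ (by positivity)
          calc (fun i => V i ω) ⬝ᵥ (fun i => V i ω) = ∑ i, V i ω * V i ω := rfl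
            _ ≤ ∑ _i : Fin m, (1:ℝ) := by
                apply Finset.sum_le_sum
                intro i _
                have h2 := abs_le.mp (hω i)
                nlinarith [h2.1, h2.2]
            _ = m := by simp
      _ = 1 := by field_simp
  have hInt : Integrable (fun ω => Real.exp (l * X ω)) μ := by
    refine Integrable.mono' (integrable_const (Real.exp l))
      ((hXmeas.const_mul l).exp).aestronglyMeasurable ?_
    filter_upwards [hXle] with ω h
    rw [Real.norm_eq_abs, Real.abs_exp, Real.exp_le_exp]
    calc l * X ω ≤ l * 1 := mul_le_mul_of_nonneg_left h hl0.le
      _ = l := mul_one _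
  have hcore : ∫ ω, Real.exp (l * X ω) ∂μ ≤ Real.exp (((m:ℝ) / 2) * M.trace) :=
    mgf_core hm μ V M hindep hmeas hmean hbdd hPSD hOp
  have htrb : ((m:ℝ)/2) * M.trace ≤ (d:ℝ)/2 := by
    calc ((m:ℝ)/2) * M.trace ≤ ((m:ℝ)/2) * ((d:ℝ)/m) :=
          mul_le_mul_of_nonneg_left hTr (by positivity)
      _ = (d:ℝ)/2 := by field_simp
  set A : Set Ω := {ω | t < X ω} with hAdef
  have hAmeas : MeasurableSet A := measurableSet_lt measurable_const hXmeas
  have hMarkov : (μ A).toReal * Real.exp (l * t) ≤ ∫ ω, Real.exp (l * X ω) ∂μ := by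
    have h1 : ∫ _ω in A, Real.exp (l * t) ∂μ ≤ ∫ ω in A, Real.exp (l * X ω) ∂μ := by
      apply setIntegral_mono_on (integrableOn_const (measure_ne_top μ A))
        hInt.integrableOn hAmeas
      intro ω hω
      exact Real.exp_le_exp.mpr (mul_le_mul_of_nonneg_left (le_of_lt hω) hl0.le)
    have h2 : ∫ _ω in A, Real.exp (l * t) ∂μ = (μ A).toReal * Real.exp (l * t) := by
      rw [setIntegral_const, smul_eq_mul, measureReal_def]
    have h3 : ∫ ω in A, Real.exp (l * X ω) ∂μ ≤ ∫ ω, Real.exp (l * X ω) ∂μ :=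
      setIntegral_le_integral hInt (Filter.Eventually.of_forall fun ω => (Real.exp_pos _).le)
    linarith
  have hlt : l * t = (d:ℝ) + Real.log (1/δ) := by
    rw [hldef, htdef]; field_simp
  have hmu : (μ A).toReal ≤ δ := by
    have hchain : (μ A).toReal * Real.exp (l*t) ≤ Real.exp ((d:ℝ)/2) :=
      le_trans hMarkov (le_trans hcore (Real.exp_le_exp.mpr htrb))
    have hpos : 0 < Real.exp (l*t) := Real.exp_pos _
    have hd0 : (0:ℝ) ≤ d := Nat.cast_nonneg d
    calc (μ A).toReal ≤ Real.exp ((d:ℝ)/2) / Real.exp (l*t) :=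
          (le_div_iff₀ hpos).mpr hchain
      _ = Real.exp ((d:ℝ)/2 - (l*t)) := (Real.exp_sub _ _).symm
      _ ≤ Real.exp (-(Real.log (1/δ))) := by
          apply Real.exp_le_exp.mpr
          rw [hlt]
          linarith
      _ = δ := by rw [one_div, Real.log_inv, neg_neg, Real.exp_log hδ0]
  have hcompl : {ω | X ω ≤ t} = Aᶜ := by
    ext ω; simp [hAdef, not_lt]
  have hgoal : (μ {ω | X ω ≤ t}).toReal = 1 - (μ A).toReal := by
    rw [hcompl, prob_compl_eq_one_sub hAmeas,
      ENNReal.toReal_sub_of_le prob_le_one ENNReal.one_ne_top, ENNReal.toReal_one]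
  show 1 - δ ≤ (μ {ω | X ω ≤ t}).toReal
  rw [hgoal]
  linarith
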